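/- For all μ > 0, Σ_{k≥1} e^{−μ} μ^k/k! · k·ln k ≤ μ·ln(1+μ). -/

import Mathlib

/-- For `N ~ Poisson(μ)`, `E[N ln N] ≤ μ ln(1+μ)` (with the convention `0·ln 0 = 0`). -/
theorem stmt_9 (μ : ℝ) (hμ : 0 < μ) :
    (∑' k : ℕ, Real.exp (-μ) * μ ^ k / (Nat.factorial k : ℝ) * ((k : ℝ) * Real.log k))
      ≤ μ * Real.log (1 + μ) := by
  have h1μ : (0:ℝ) < 1 + μ := by linarith
  set p : ℕ → ℝ := fun j => Real.exp (-μ) * μ ^ j / (Nat.factorial j : ℝ) with hpdef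
  have hp_nonneg : ∀ j, 0 ≤ p j := fun j => by positivity
  have hexp : HasSum (fun j : ℕ => μ ^ j / (Nat.factorial j : ℝ)) (Real.exp μ) := by
    rw [Real.exp_eq_exp_ℝ]; exact NormedSpace.expSeries_div_hasSum_exp μ
  have hp1 : HasSum p 1 := by
    have := hexp.mul_left (Real.exp (-μ))
    simpa [hpdef, mul_div_assoc, ← Real.exp_add] using this
  -- mean: ∑ p j * j = μ
  have hshift : ∀ j : ℕ, p (j + 1) * ((j:ℝ) + 1) = μ * p j := by
    intro j
    have hf : ((Nat.factorial j : ℝ)) ≠ 0 := by positivity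
    simp only [hpdef, Nat.factorial_succ, pow_succ]
    push_cast
    field_simp
  have hf1 : HasSum (fun j : ℕ => p (j + 1) * (((j:ℕ) + 1 : ℕ) : ℝ)) μ := by
    have := hp1.mul_left μ
    simp only [mul_one] at this
    have e : (fun j : ℕ => p (j + 1) * (((j:ℕ) + 1 : ℕ) : ℝ)) = fun i => μ * p i := by
      funext j
      push_cast
      exact hshift j
    rw [e]
    exact this
  have hpj : HasSum (fun j : ℕ => p j * (j : ℝ)) μ := by
    have := (hasSum_nat_add_iff (f := fun j : ℕ => p j * (j : ℝ)) 1).mp hf1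
    simpa using this
  -- the log-sum
  have hlog_le : ∀ j : ℕ, Real.log ((j:ℝ) + 1) ≤ Real.log (1 + μ) + ((j:ℝ) - μ) / (1 + μ) := by
    intro j
    have hj1 : (0:ℝ) < (j:ℝ) + 1 := by positivity
    have h := Real.log_le_sub_one_of_pos (x := ((j:ℝ) + 1) / (1 + μ)) (by positivity)
    rw [Real.log_div hj1.ne' h1μ.ne'] at h
    have heq : ((j:ℝ) + 1) / (1 + μ) - 1 = ((j:ℝ) - μ) / (1 + μ) := by
      field_simp
      ring
    linarith
  have hq_nonneg : ∀ j : ℕ, 0 ≤ p j * Real.log ((j:ℝ) + 1) := by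
    intro j
    exact mul_nonneg (hp_nonneg j) (Real.log_nonneg (by linarith [Nat.cast_nonneg (α := ℝ) j]))
  have hq_sum : Summable (fun j : ℕ => p j * Real.log ((j:ℝ) + 1)) := by
    refine Summable.of_nonneg_of_le hq_nonneg (fun j => ?_) hpj.summable
    refine mul_le_mul_of_nonneg_left ?_ (hp_nonneg j)
    have := Real.log_le_sub_one_of_pos (x := (j:ℝ) + 1) (by positivity)
    linarith
  have hr : HasSum (fun j : ℕ => p j * (Real.log (1 + μ) + ((j:ℝ) - μ) / (1 + μ)))
      (Real.log (1 + μ)) := by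
    have h1 := hp1.mul_right (Real.log (1 + μ) - μ / (1 + μ))
    have h2 := hpj.mul_right (1 / (1 + μ))
    have h := h1.add h2
    have hpt : ∀ j : ℕ, p j * (Real.log (1 + μ) - μ / (1 + μ)) + p j * (j:ℝ) * (1 / (1 + μ))
        = p j * (Real.log (1 + μ) + ((j:ℝ) - μ) / (1 + μ)) := by
      intro j
      field_simp
      ring
    have hval : 1 * (Real.log (1 + μ) - μ / (1 + μ)) + μ * (1 / (1 + μ)) = Real.log (1 + μ) := by
      field_simp
      ring
    rw [hval] at h
    simp only [hpt] at h
    exact h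
  set L : ℝ := ∑' j : ℕ, p j * Real.log ((j:ℝ) + 1) with hL
  have hL_le : L ≤ Real.log (1 + μ) := by
    rw [hL, ← hr.tsum_eq]
    exact Summable.tsum_le_tsum (fun j => mul_le_mul_of_nonneg_left (hlog_le j) (hp_nonneg j))
      hq_sum hr.summable
  -- reindex the main sum
  set g : ℕ → ℝ := fun k => Real.exp (-μ) * μ ^ k / (Nat.factorial k : ℝ) * ((k:ℝ) * Real.log k)
    with hgdef
  have hg_succ : ∀ j : ℕ, g (j + 1) = μ * (p j * Real.log ((j:ℝ) + 1)) := by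
    intro j
    have hf : ((Nat.factorial j : ℝ)) ≠ 0 := by positivity
    simp only [hgdef, hpdef, Nat.factorial_succ, pow_succ]
    push_cast
    field_simp
  have hgs : HasSum (fun j : ℕ => g (j + 1)) (μ * L) := by
    have := hq_sum.hasSum.mul_left μ
    simpa [hg_succ, hL] using this
  have hg : HasSum g (μ * L) := by
    have := (hasSum_nat_add_iff (f := g) 1).mp hgs
    simpa [hgdef] using this
  calc (∑' k : ℕ, Real.exp (-μ) * μ ^ k / (Nat.factorial k : ℝ) * ((k : ℝ) * Real.log k))
      = μ * L := hg.tsum_eq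
    _ ≤ μ * Real.log (1 + μ) := mul_le_mul_of_nonneg_left hL_le hμ.le
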